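/- Let ρ = (−1 + √−3)/2 (a primitive cube root of unity), let Λ = ℤ + ℤρ ⊆ ℂ be the Eisenstein lattice and E = ℂ/Λ, and take ω' = 1 + 2ρ (= √−3) and ω = ρ·ω' (so that ω·Λ ⊆ Λ, ω'·Λ ⊆ Λ, and (ω/ω')³ = 1). Then for every n ≥ 0, ([ω] × [ω'])^{n+3}(Δ) = ([ω] × [ω'])^{n}(Δ) and (φ_ω × φ_{ω'})^{n+3}(Δ') = (φ_ω × φ_{ω'})^{n}(Δ'); that is, Δ and Δ' are both pre-periodic with the same pair (n,3). -/

import Mathlib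

open Complex

noncomputable section

/-- The analytic model `E = ℂ/Λ` of an elliptic curve with period lattice `Λ`. -/
abbrev EC (Λ : AddSubgroup ℂ) : Type := ℂ ⧸ Λ

/-- The endomorphism `[ω] : E → E` induced by multiplication by `ω` on `ℂ`,
for `ω` with `ω·Λ ⊆ Λ`. -/
def mulE (Λ : AddSubgroup ℂ) (ω : ℂ) (hω : ∀ x ∈ Λ, ω * x ∈ Λ) : EC Λ →+ EC Λ :=
  QuotientAddGroup.map Λ Λ (AddMonoidHom.mulLeft ω) (fun x hx => hω x hx)

/-- The relation identifying a point of `E` with its negative. -/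
def negRel (Λ : AddSubgroup ℂ) (x y : EC Λ) : Prop := x = y ∨ x = -y

/-- The quotient `E/±` of `E` by the involution `z ↦ -z`. -/
abbrev ECpm (Λ : AddSubgroup ℂ) : Type := Quot (negRel Λ)

/-- The quotient map `q : E → E/±`. -/
def qpm (Λ : AddSubgroup ℂ) : EC Λ → ECpm Λ := Quot.mk _

/-- The Lattès-type map `φ_ω : E/± → E/±` induced by `[ω]`. -/
def lattes (Λ : AddSubgroup ℂ) (ω : ℂ) (hω : ∀ x ∈ Λ, ω * x ∈ Λ) :
    ECpm Λ → ECpm Λ :=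
  Quot.map (mulE Λ ω hω) (by
    intro x y h
    rcases h with h | h
    · exact Or.inl (by rw [h])
    · exact Or.inr (by rw [h, map_neg]))

/-- General lemma: if two self-maps have equal cubes and the cube is surjective,
the diagonal is pre-periodic with pair `(n, 3)` for the product map. -/
lemma diag_preperiodic_of_cube {α : Type*} (f g : α → α)
    (h3 : ∀ x, f (f (f x)) = g (g (g x)))
    (hsurj : ∀ y, ∃ x, f (f (f x)) = y) (n : ℕ) :
    (Prod.map f g)^[n + 3] '' Set.diagonal α =
      (Prod.map f g)^[n] '' Set.diagonal α := by
  have hiter : ∀ m : ℕ, ∀ z : α,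
      (Prod.map f g)^[m] (z, z) = (f^[m] z, g^[m] z) := by
    intro m z
    rw [Prod.map_iterate]
    rfl
  have hf3 : ∀ z : α, f^[3] z = f (f (f z)) := fun z => rfl
  have hg3 : ∀ z : α, g^[3] z = g (g (g z)) := fun z => rfl
  ext ⟨a, b⟩
  simp only [Set.mem_image, Set.mem_diagonal_iff]
  constructor
  · rintro ⟨⟨z, z'⟩, hz, hmap⟩
    cases hz
    rw [hiter] at hmap
    refine ⟨(f (f (f z)), f (f (f z))), rfl, ?_⟩
    rw [hiter]
    have h1 : f^[n] (f (f (f z))) = f^[n + 3] z := by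
      rw [Function.iterate_add_apply f n 3 z, hf3]
    have h2 : g^[n] (f (f (f z))) = g^[n + 3] z := by
      rw [h3, Function.iterate_add_apply g n 3 z, hg3]
    rw [h1, h2, hmap]
  · rintro ⟨⟨z, z'⟩, hz, hmap⟩
    cases hz
    rw [hiter] at hmap
    obtain ⟨x, hx⟩ := hsurj z
    refine ⟨(x, x), rfl, ?_⟩
    rw [hiter]
    have h1 : f^[n + 3] x = f^[n] z := by
      rw [Function.iterate_add_apply f n 3 x, hf3, hx]
    have h2 : g^[n + 3] x = g^[n] z := by
      rw [Function.iterate_add_apply g n 3 x, hg3, ← h3, hx]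
    rw [h1, h2, hmap]

/-- For the Eisenstein lattice `Λ = ℤ + ℤρ` with `ρ = (-1 + √-3)/2`, `ω' = 1 + 2ρ = √-3` and
`ω = ρ·ω'`, for every `n` both the diagonal `Δ` and the diagonal `Δ'` are pre-periodic with
the same pair `(n, 3)`. -/
theorem eisenstein_diagonals_preperiodic_pair_three
    (ρ : ℂ) (hρ : ρ = (-1 + Complex.I * Real.sqrt 3) / 2)
    (Λ : AddSubgroup ℂ) (hΛ : Λ = AddSubgroup.closure {(1 : ℂ), ρ})
    (ω' ω : ℂ) (hω'def : ω' = 1 + 2 * ρ) (hωdef : ω = ρ * ω')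
    (hω : ∀ x ∈ Λ, ω * x ∈ Λ) (hω' : ∀ x ∈ Λ, ω' * x ∈ Λ)
    (n : ℕ) :
    (Prod.map ⇑(mulE Λ ω hω) ⇑(mulE Λ ω' hω'))^[n + 3] '' Set.diagonal (EC Λ) =
      (Prod.map ⇑(mulE Λ ω hω) ⇑(mulE Λ ω' hω'))^[n] '' Set.diagonal (EC Λ) ∧
    (Prod.map (lattes Λ ω hω) (lattes Λ ω' hω'))^[n + 3] '' Set.diagonal (ECpm Λ) =
      (Prod.map (lattes Λ ω hω) (lattes Λ ω' hω'))^[n] '' Set.diagonal (ECpm Λ) := by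
  -- algebraic facts
  have hsq : (Real.sqrt 3 : ℂ) ^ 2 = 3 := by
    rw [← Complex.ofReal_pow, Real.sq_sqrt (by norm_num : (0:ℝ) ≤ 3)]
    norm_num
  have hquad : ρ ^ 2 + ρ + 1 = 0 := by
    subst hρ
    have hI : Complex.I ^ 2 = -1 := Complex.I_sq
    linear_combination (Complex.I ^ 2 / 4) * hsq + ((3 : ℂ) / 4) * hI
  have hρ3 : ρ ^ 3 = 1 := by linear_combination (ρ - 1) * hquad
  have hcc : ω ^ 3 = ω' ^ 3 := by
    rw [hωdef]; linear_combination ω' ^ 3 * hρ3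
  have hω'2 : ω' ^ 2 = -3 := by
    rw [hω'def]; linear_combination 4 * hquad
  have hωne : ω ^ 3 ≠ 0 := by
    rw [hcc]
    intro h
    have hω'0 : ω' = 0 := by
      have := pow_eq_zero_iff (n := 3) (by norm_num) |>.mp h
      exact this
    rw [hω'0] at hω'2
    norm_num at hω'2
  -- pointwise facts about mulE
  set f : EC Λ → EC Λ := ⇑(mulE Λ ω hω) with hf
  set g : EC Λ → EC Λ := ⇑(mulE Λ ω' hω') with hg
  have hmk : ∀ (a : ℂ) (ha : ∀ x ∈ Λ, a * x ∈ Λ) (z : ℂ),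
      mulE Λ a ha ((z : ℂ) : EC Λ) = ((a * z : ℂ) : EC Λ) := by
    intro a ha z
    rfl
  have h3 : ∀ x : EC Λ, f (f (f x)) = g (g (g x)) := by
    intro x
    induction x using QuotientAddGroup.induction_on with
    | H z =>
      show mulE Λ ω hω (mulE Λ ω hω (mulE Λ ω hω z)) =
        mulE Λ ω' hω' (mulE Λ ω' hω' (mulE Λ ω' hω' z))
      rw [hmk, hmk, hmk, hmk, hmk, hmk]
      congr 1
      linear_combination z * hcc
  have hsurj : ∀ y : EC Λ, ∃ x, f (f (f x)) = y := by
    intro y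
    induction y using QuotientAddGroup.induction_on with
    | H w =>
      refine ⟨((w / ω ^ 3 : ℂ) : EC Λ), ?_⟩
      show mulE Λ ω hω (mulE Λ ω hω (mulE Λ ω hω ((w / ω ^ 3 : ℂ) : EC Λ))) = _
      rw [hmk, hmk, hmk]
      congr 1
      field_simp
      have hω0 : ω ≠ 0 := fun h => hωne (by rw [h]; ring)
      rw [mul_comm ω w, mul_div_cancel_right₀ w hω0]
  -- lattes level
  set φ : ECpm Λ → ECpm Λ := lattes Λ ω hω with hφ
  set ψ : ECpm Λ → ECpm Λ := lattes Λ ω' hω' with hψ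
  have hφmk : ∀ x : EC Λ, φ (Quot.mk _ x) = Quot.mk _ (f x) := fun x => rfl
  have hψmk : ∀ x : EC Λ, ψ (Quot.mk _ x) = Quot.mk _ (g x) := fun x => rfl
  have h3' : ∀ x : ECpm Λ, φ (φ (φ x)) = ψ (ψ (ψ x)) := by
    intro x
    induction x using Quot.ind with
    | mk z =>
      rw [hφmk, hφmk, hφmk, hψmk, hψmk, hψmk, h3]
  have hsurj' : ∀ y : ECpm Λ, ∃ x, φ (φ (φ x)) = y := by
    intro y
    induction y using Quot.ind with
    | mk w =>
      obtain ⟨x, hx⟩ := hsurj w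
      exact ⟨Quot.mk _ x, by rw [hφmk, hφmk, hφmk, hx]⟩
  exact ⟨diag_preperiodic_of_cube f g h3 hsurj n,
    diag_preperiodic_of_cube φ ψ h3' hsurj' n⟩
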